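/- Let a = 1 and α := b x_{-1} x_0 with α ≠ -1/n for all positive integers n. Then every solution of x_{n+1} = x_{n-1}/(a + b x_n x_{n-1}) satisfies x_{n+1} = h(n) x_{n-1} for all n ≥ 0, where h(n) = (1 + α n)/(1 + α(n+1)). -/

import Mathlib

theorem stmt_5 (b : ℝ) (x : ℤ → ℝ) (α : ℝ)
    (halpha : α = b * x (-1) * x 0)
    (hadm : ∀ n : ℕ, 1 ≤ n → α ≠ -1 / (n : ℝ))
    (hrec : ∀ n : ℕ, x ((n : ℤ) + 1) = x ((n : ℤ) - 1) / (1 + b * x (n : ℤ) * x ((n : ℤ) - 1))) :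
    ∀ n : ℕ, x ((n : ℤ) + 1) = ((1 + α * n) / (1 + α * (n + 1))) * x ((n : ℤ) - 1) := by
  have hne : ∀ n : ℕ, 1 + α * (n : ℝ) ≠ 0 := by
    intro n
    rcases Nat.eq_zero_or_pos n with h | h
    · simp [h]
    · intro hz
      apply hadm n h
      have hn : (n : ℝ) ≠ 0 := Nat.cast_ne_zero.mpr h.ne'
      field_simp
      linarith
  have key : ∀ n : ℕ, b * x (n : ℤ) * x ((n : ℤ) - 1) = α / (1 + α * n) := by
    intro n
    induction n with
    | zero =>
      simp only [Nat.cast_zero, mul_zero, add_zero, div_one]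
      have : (0 : ℤ) - 1 = -1 := by ring
      rw [this, halpha]; ring
    | succ k ih =>
      have hcast : ((k + 1 : ℕ) : ℤ) = (k : ℤ) + 1 := by push_cast; ring
      rw [hcast, show (k : ℤ) + 1 - 1 = (k : ℤ) by ring, hrec k]
      have h1 := hne k
      have h2 : 1 + α * ((k : ℝ) + 1) ≠ 0 := by
        have := hne (k + 1); push_cast at this; exact this
      have h2' : 1 + α * (k : ℝ) + α ≠ 0 := by
        intro h; apply h2; linarith
      have e : b * (x ((k : ℤ) - 1) / (1 + b * x (k : ℤ) * x ((k : ℤ) - 1))) * x (k : ℤ)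
          = (b * x (k : ℤ) * x ((k : ℤ) - 1)) / (1 + b * x (k : ℤ) * x ((k : ℤ) - 1)) := by
        ring
      rw [e, ih]
      push_cast
      field_simp
      ring
  intro n
  have h1 := hne n
  have h2 : 1 + α * ((n : ℝ) + 1) ≠ 0 := by
    have := hne (n + 1); push_cast at this; exact this
  rw [hrec n, key n,
    show 1 + α / (1 + α * (n : ℝ)) = (1 + α * ((n : ℝ) + 1)) / (1 + α * (n : ℝ)) by
      field_simp; ring,
    div_div_eq_mul_div]
  ring
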